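/- arXiv:1601.04533 — 2 statements merged into one kernel-verified Lean document; each statement's English description precedes it below -/
import Mathlib

section
/- For a triangle-free finite simple graph, the local curvature K(v) = 1 - 5d/2 + d^2/2 + (Σ_i d_i)/2 at a vertex v of degree d with neighbor degrees d_i satisfies: summing K(v) over all vertices gives the Wu characteristic. -/
open Finset

variable {V : Type*} [Fintype V] [DecidableEq V]

/-- The simplices of a graph: nonempty complete subgraphs, encoded as vertex sets. -/
def simplices (G : SimpleGraph V) [DecidableRel G.Adj] : Finset (Finset V) :=
  Finset.univ.filter fun s => s.Nonempty ∧ ∀ a ∈ s, ∀ b ∈ s, a ≠ b → G.Adj a b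

/-- dimension of a simplex -/
def dimS (s : Finset V) : ℕ := s.card - 1

/-- Euler characteristic -/
def euler (G : SimpleGraph V) [DecidableRel G.Adj] : ℤ :=
  ∑ s ∈ simplices G, (-1 : ℤ) ^ dimS s

/-- Wu characteristic -/
def wu (G : SimpleGraph V) [DecidableRel G.Adj] : ℤ :=
  ∑ x ∈ simplices G, ∑ y ∈ simplices G,
    if (x ∩ y).Nonempty then (-1 : ℤ) ^ (dimS x + dimS y) else 0

/-- number of (k+1)-cliques, the k-th entry of the f-vector -/
def nf (G : SimpleGraph V) [DecidableRel G.Adj] (k : ℕ) : ℕ :=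
  ((simplices G).filter fun s => s.card = k + 1).card

section aux
variable (G : SimpleGraph V) [DecidableRel G.Adj]

lemma singleton_mem_simplices (v : V) : ({v} : Finset V) ∈ simplices G := by
  simp [simplices]

lemma pair_mem_simplices {a b : V} (h : G.Adj a b) : ({a, b} : Finset V) ∈ simplices G := by
  simp only [simplices, mem_filter, mem_univ, true_and]
  refine ⟨⟨a, by simp⟩, ?_⟩
  intro x hx y hy hxy
  simp only [mem_insert, mem_singleton] at hx hy
  rcases hx with rfl | rfl <;> rcases hy with rfl | rfl <;>
    first | exact absurd rfl hxy | exact h | exact h.symm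

lemma card_mem_simplices {s : Finset V} (hfree : G.CliqueFree 3) (hs : s ∈ simplices G) :
    s.card = 1 ∨ s.card = 2 := by
  simp only [simplices, mem_filter, mem_univ, true_and] at hs
  obtain ⟨hne, hcl⟩ := hs
  have h1 : 1 ≤ s.card := Finset.card_pos.2 hne
  by_contra h
  push_neg at h
  have h3 : 3 ≤ s.card := by omega
  obtain ⟨t, hts, ht3⟩ := Finset.exists_subset_card_eq h3
  exact hfree t ⟨fun x hx y hy hxy => hcl x (hts hx) y (hts hy) hxy, ht3⟩

end aux

section aux2
variable (G : SimpleGraph V) [DecidableRel G.Adj]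

lemma sum_adjPairs (F : V × V → ℚ) :
    ∑ p ∈ univ.filter (fun p : V × V => G.Adj p.1 p.2), F p
      = ∑ a : V, ∑ b : V, if G.Adj a b then F (a, b) else 0 := by
  rw [sum_filter, Fintype.sum_prod_type]

lemma filter_card_one :
    (simplices G).filter (fun s => s.card = 1) = univ.image (fun v => ({v} : Finset V)) := by
  ext s
  simp only [mem_filter, mem_image, mem_univ, true_and]
  constructor
  · rintro ⟨-, hc⟩
    obtain ⟨a, rfl⟩ := Finset.card_eq_one.1 hc
    exact ⟨a, rfl⟩
  · rintro ⟨a, rfl⟩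
    exact ⟨singleton_mem_simplices G a, by simp⟩

lemma fiber_card_two {s : Finset V} (hs : s ∈ simplices G) (hc : s.card = 2) :
    ((univ.filter fun p : V × V => G.Adj p.1 p.2).filter
      (fun p => ({p.1, p.2} : Finset V) = s)).card = 2 := by
  obtain ⟨a, b, hab, rfl⟩ := Finset.card_eq_two.1 hc
  have hfil : ((univ.filter fun p : V × V => G.Adj p.1 p.2).filter
      (fun p => ({p.1, p.2} : Finset V) = {a, b})) = {(a, b), (b, a)} := by
    simp only [simplices, mem_filter, mem_univ, true_and] at hs
    have hadj : G.Adj a b := hs.2 a (by simp) b (by simp) hab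
    ext p
    simp only [mem_filter, mem_univ, true_and, mem_insert, mem_singleton]
    constructor
    · rintro ⟨hpadj, heq⟩
      have h1 : p.1 ∈ ({a, b} : Finset V) := heq ▸ (by simp)
      have h2 : p.2 ∈ ({a, b} : Finset V) := heq ▸ (by simp)
      have hne : p.1 ≠ p.2 := hpadj.ne
      simp only [mem_insert, mem_singleton] at h1 h2
      rcases h1 with h1 | h1 <;> rcases h2 with h2 | h2
      · exact absurd (h1.trans h2.symm) hne
      · left; exact Prod.ext h1 h2
      · right; exact Prod.ext h1 h2
      · exact absurd (h1.trans h2.symm) hne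
    · rintro (rfl | rfl)
      · exact ⟨hadj, rfl⟩
      · exact ⟨hadj.symm, by rw [Finset.pair_comm]⟩
  rw [hfil]
  rw [Finset.card_insert_of_notMem (by simp [Prod.ext_iff, hab]), Finset.card_singleton]

lemma sum_simplices_eq (hfree : G.CliqueFree 3) (f : Finset V → ℚ) :
    ∑ s ∈ simplices G, f s =
      (∑ v : V, f {v}) +
        (1 / 2) * ∑ p ∈ univ.filter (fun p : V × V => G.Adj p.1 p.2), f {p.1, p.2} := by
  have hsplit := Finset.sum_filter_add_sum_filter_not (simplices G) (fun s => s.card = 1) f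
  have hnot : (simplices G).filter (fun s => ¬ s.card = 1)
      = (simplices G).filter (fun s => s.card = 2) := by
    ext s
    simp only [mem_filter, and_congr_right_iff]
    intro hs
    have := card_mem_simplices G hfree hs
    omega
  have hmaps : ∀ p ∈ univ.filter (fun p : V × V => G.Adj p.1 p.2),
      ({p.1, p.2} : Finset V) ∈ (simplices G).filter (fun s => s.card = 2) := by
    intro p hp
    simp only [mem_filter, mem_univ, true_and] at hp ⊢
    exact ⟨pair_mem_simplices G hp, Finset.card_pair hp.ne⟩
  have hfib := Finset.sum_fiberwise_of_maps_to' hmaps f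
  have h2 : ∑ p ∈ univ.filter (fun p : V × V => G.Adj p.1 p.2), f {p.1, p.2}
      = 2 * ∑ s ∈ (simplices G).filter (fun s => s.card = 2), f s := by
    rw [← hfib, Finset.mul_sum]
    refine Finset.sum_congr rfl fun s hs => ?_
    rw [Finset.sum_const]
    simp only [mem_filter] at hs
    rw [fiber_card_two G hs.1 hs.2]
    push_cast
    ring
  rw [← hsplit, hnot, h2, filter_card_one,
    Finset.sum_image (fun a _ b _ h => Finset.singleton_injective h)]
  ring

end aux2

section aux3
variable (G : SimpleGraph V) [DecidableRel G.Adj]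

lemma ind_pair {a b c d : V} (hab : a ≠ b) (hcd : c ≠ d) :
    (if (({a, b} : Finset V) ∩ {c, d}).Nonempty then (1 : ℚ) else 0) =
      ((if a = c then (1 : ℚ) else 0) + (if a = d then 1 else 0) +
        (if b = c then 1 else 0) + (if b = d then 1 else 0))
        - (if a = c ∧ b = d then 1 else 0) - (if a = d ∧ b = c then 1 else 0) := by
  have hiff : (({a, b} : Finset V) ∩ {c, d}).Nonempty ↔ (a = c ∨ a = d ∨ b = c ∨ b = d) := by
    constructor
    · rintro ⟨x, hx⟩
      simp only [mem_inter, mem_insert, mem_singleton] at hx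
      obtain ⟨h1 | h1, h2 | h2⟩ := hx <;> subst h1 <;> simp [h2]
    · rintro (rfl | rfl | rfl | rfl)
      · exact ⟨a, by simp⟩
      · exact ⟨a, by simp⟩
      · exact ⟨b, by simp⟩
      · exact ⟨b, by simp⟩
  simp only [hiff]
  by_cases h1 : a = c <;> by_cases h2 : a = d <;> by_cases h3 : b = c <;> by_cases h4 : b = d <;>
    simp_all <;> norm_num

lemma degQ (a : V) : ∑ b : V, (if G.Adj a b then (1 : ℚ) else 0) = (G.degree a : ℚ) := by
  rw [Finset.sum_boole, SimpleGraph.degree, SimpleGraph.neighborFinset_eq_filter]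

lemma degQ' (a : V) : ∑ b : V, (if G.Adj b a then (1 : ℚ) else 0) = (G.degree a : ℚ) := by
  simp_rw [G.adj_comm _ a]
  exact degQ G a

lemma sum_adj_left (g : V → ℚ) :
    ∑ a : V, ∑ b : V, (if G.Adj a b then g a else 0) = ∑ a : V, g a * (G.degree a : ℚ) := by
  refine Finset.sum_congr rfl fun a _ => ?_
  have : ∀ b, (if G.Adj a b then g a else 0) = g a * (if G.Adj a b then (1 : ℚ) else 0) := by
    intro b; split <;> ring
  simp_rw [this, ← Finset.mul_sum, degQ]

lemma sum_adj_right (g : V → ℚ) :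
    ∑ a : V, ∑ b : V, (if G.Adj a b then g b else 0) = ∑ b : V, g b * (G.degree b : ℚ) := by
  rw [Finset.sum_comm]
  refine Finset.sum_congr rfl fun b _ => ?_
  have : ∀ a, (if G.Adj a b then g b else 0) = g b * (if G.Adj a b then (1 : ℚ) else 0) := by
    intro a; split <;> ring
  simp_rw [this, ← Finset.mul_sum, degQ']

end aux3

section aux4
variable (G : SimpleGraph V) [DecidableRel G.Adj]

lemma dim_single (v : V) : dimS ({v} : Finset V) = 0 := by simp [dimS]

lemma dim_pair {a b : V} (h : a ≠ b) : dimS ({a, b} : Finset V) = 1 := by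
  simp [dimS, Finset.card_pair h]

lemma piece1 :
    ∑ v : V, ∑ w : V,
        (if (({v} : Finset V) ∩ {w}).Nonempty then (-1 : ℚ) ^ (dimS ({v} : Finset V) + dimS ({w} : Finset V)) else 0)
      = (Fintype.card V : ℚ) := by
  have hpt : ∀ v w : V,
      (if (({v} : Finset V) ∩ {w}).Nonempty then (-1 : ℚ) ^ (dimS ({v} : Finset V) + dimS ({w} : Finset V)) else 0)
        = if v = w then (1 : ℚ) else 0 := by
    intro v w
    by_cases h : v = w
    · subst h; simp [dim_single]
    · rw [if_neg h, if_neg]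
      rw [Finset.singleton_inter_of_notMem (by simp [h])]
      exact Finset.not_nonempty_empty
  simp_rw [hpt, Finset.sum_ite_eq, mem_univ, if_true, Finset.sum_const, Fintype.card]
  simp

lemma singleton_pair_ind (v a b : V) (hab : a ≠ b) :
    (if (({v} : Finset V) ∩ {a, b}).Nonempty then (-1 : ℚ) ^ (dimS ({v} : Finset V) + dimS ({a, b} : Finset V)) else 0)
      = -((if v = a then (1 : ℚ) else 0) + (if v = b then 1 else 0)) := by
  rw [dim_single, dim_pair hab]
  have hiff : (({v} : Finset V) ∩ {a, b}).Nonempty ↔ v = a ∨ v = b := by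
    constructor
    · rintro ⟨x, hx⟩
      simp only [mem_inter, mem_singleton, mem_insert] at hx
      obtain ⟨rfl, h⟩ := hx
      exact h
    · rintro (rfl | rfl)
      · exact ⟨v, by simp⟩
      · exact ⟨v, by simp⟩
  by_cases h1 : v = a <;> by_cases h2 : v = b <;>
    simp_all [hiff] <;> norm_num

lemma sum_singleton_pair (a b : V) (hab : a ≠ b) :
    ∑ v : V, (if (({v} : Finset V) ∩ {a, b}).Nonempty then (-1 : ℚ) ^ (dimS ({v} : Finset V) + dimS ({a, b} : Finset V)) else 0)
      = -2 := by
  simp_rw [singleton_pair_ind _ a b hab]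
  rw [Finset.sum_neg_distrib, Finset.sum_add_distrib, Finset.sum_ite_eq', Finset.sum_ite_eq']
  simp
  norm_num

end aux4

section aux5
variable (G : SimpleGraph V) [DecidableRel G.Adj]

lemma pair_singleton_ind (w a b : V) (hab : a ≠ b) :
    (if (({a, b} : Finset V) ∩ {w}).Nonempty then (-1 : ℚ) ^ (dimS ({a, b} : Finset V) + dimS ({w} : Finset V)) else 0)
      = -((if a = w then (1 : ℚ) else 0) + (if b = w then 1 else 0)) := by
  rw [dim_single, dim_pair hab]
  have hiff : (({a, b} : Finset V) ∩ {w}).Nonempty ↔ a = w ∨ b = w := by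
    constructor
    · rintro ⟨x, hx⟩
      simp only [mem_inter, mem_singleton, mem_insert] at hx
      obtain ⟨h, rfl⟩ := hx
      exact h.imp Eq.symm Eq.symm
    · rintro (rfl | rfl)
      · exact ⟨a, by simp⟩
      · exact ⟨b, by simp⟩
  by_cases h1 : a = w <;> by_cases h2 : b = w <;>
    simp_all [hiff] <;> norm_num

lemma sum_pair_singleton (a b : V) (hab : a ≠ b) :
    ∑ w : V, (if (({a, b} : Finset V) ∩ {w}).Nonempty then (-1 : ℚ) ^ (dimS ({a, b} : Finset V) + dimS ({w} : Finset V)) else 0)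
      = -2 := by
  simp_rw [pair_singleton_ind _ a b hab]
  rw [Finset.sum_neg_distrib, Finset.sum_add_distrib, Finset.sum_ite_eq, Finset.sum_ite_eq]
  simp
  norm_num

lemma piece3 :
    ∑ v : V, ∑ p ∈ univ.filter (fun p : V × V => G.Adj p.1 p.2),
        (if (({v} : Finset V) ∩ {p.1, p.2}).Nonempty then
          (-1 : ℚ) ^ (dimS ({v} : Finset V) + dimS ({p.1, p.2} : Finset V)) else 0)
      = -2 * ∑ v : V, (G.degree v : ℚ) := by
  rw [Finset.sum_comm, sum_adjPairs]
  have hpt : ∀ a b : V, (if G.Adj a b then (∑ v : V,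
      if (({v} : Finset V) ∩ {a, b}).Nonempty then
        (-1 : ℚ) ^ (dimS ({v} : Finset V) + dimS ({a, b} : Finset V)) else 0) else 0)
      = if G.Adj a b then (-2 : ℚ) else 0 := by
    intro a b
    by_cases h : G.Adj a b
    · rw [if_pos h, if_pos h, sum_singleton_pair a b h.ne]
    · rw [if_neg h, if_neg h]
  simp_rw [hpt]
  rw [sum_adj_left G (fun _ => (-2 : ℚ)), Finset.mul_sum]

lemma piece2 :
    ∑ p ∈ univ.filter (fun p : V × V => G.Adj p.1 p.2), ∑ w : V,
        (if (({p.1, p.2} : Finset V) ∩ {w}).Nonempty then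
          (-1 : ℚ) ^ (dimS ({p.1, p.2} : Finset V) + dimS ({w} : Finset V)) else 0)
      = -2 * ∑ v : V, (G.degree v : ℚ) := by
  rw [sum_adjPairs]
  have hpt : ∀ a b : V, (if G.Adj a b then (∑ w : V,
      if (({a, b} : Finset V) ∩ {w}).Nonempty then
        (-1 : ℚ) ^ (dimS ({a, b} : Finset V) + dimS ({w} : Finset V)) else 0) else 0)
      = if G.Adj a b then (-2 : ℚ) else 0 := by
    intro a b
    by_cases h : G.Adj a b
    · rw [if_pos h, if_pos h, sum_pair_singleton a b h.ne]
    · rw [if_neg h, if_neg h]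
  simp_rw [hpt]
  rw [sum_adj_left G (fun _ => (-2 : ℚ)), Finset.mul_sum]

lemma sum_adj_fst_eq (a : V) :
    ∑ c : V, ∑ d : V, (if G.Adj c d then (if a = c then (1 : ℚ) else 0) else 0)
      = (G.degree a : ℚ) := by
  have hpt : ∀ c d : V, (if G.Adj c d then (if a = c then (1 : ℚ) else 0) else 0)
      = (if a = c then (if G.Adj c d then (1 : ℚ) else 0) else 0) := by
    intro c d
    by_cases h1 : G.Adj c d <;> by_cases h2 : a = c <;> simp [h1, h2]
  simp_rw [hpt]
  have h2 : ∀ c : V, ∑ d : V, (if a = c then (if G.Adj c d then (1 : ℚ) else 0) else 0)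
      = if a = c then (G.degree c : ℚ) else 0 := by
    intro c
    by_cases h : a = c
    · simp only [if_pos h]
      exact degQ G c
    · simp [h]
  simp_rw [h2, Finset.sum_ite_eq, mem_univ, if_true]

end aux5

section aux6
variable (G : SimpleGraph V) [DecidableRel G.Adj]

lemma sum_adj_snd_eq (a : V) :
    ∑ c : V, ∑ d : V, (if G.Adj c d then (if a = d then (1 : ℚ) else 0) else 0)
      = (G.degree a : ℚ) := by
  rw [Finset.sum_comm]
  have hpt : ∀ d c : V, (if G.Adj c d then (if a = d then (1 : ℚ) else 0) else 0)
      = (if a = d then (if G.Adj c d then (1 : ℚ) else 0) else 0) := by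
    intro d c
    by_cases h1 : G.Adj c d <;> by_cases h2 : a = d <;> simp [h1, h2]
  simp_rw [hpt]
  have h2 : ∀ d : V, ∑ c : V, (if a = d then (if G.Adj c d then (1 : ℚ) else 0) else 0)
      = if a = d then (G.degree d : ℚ) else 0 := by
    intro d
    by_cases h : a = d
    · simp only [if_pos h]
      exact degQ' G d
    · simp [h]
  simp_rw [h2, Finset.sum_ite_eq, mem_univ, if_true]

lemma sum_adj_both (a b : V) :
    ∑ c : V, ∑ d : V, (if G.Adj c d then (if a = c ∧ b = d then (1 : ℚ) else 0) else 0)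
      = if G.Adj a b then (1 : ℚ) else 0 := by
  have hpt : ∀ c d : V, (if G.Adj c d then (if a = c ∧ b = d then (1 : ℚ) else 0) else 0)
      = (if a = c then (if b = d then (if G.Adj c d then (1 : ℚ) else 0) else 0) else 0) := by
    intro c d
    by_cases h1 : G.Adj c d <;> by_cases h2 : a = c <;> by_cases h3 : b = d <;>
      simp [h1, h2, h3]
  simp_rw [hpt]
  have h2 : ∀ c : V, ∑ d : V, (if a = c then (if b = d then (if G.Adj c d then (1 : ℚ) else 0) else 0) else 0)
      = if a = c then (if G.Adj c b then (1 : ℚ) else 0) else 0 := by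
    intro c
    by_cases h : a = c
    · simp only [if_pos h]
      rw [Finset.sum_ite_eq, if_pos (mem_univ b)]
    · simp [h]
  simp_rw [h2, Finset.sum_ite_eq, if_pos (mem_univ a)]

lemma pair_pair_sum {a b : V} (hab : G.Adj a b) :
    ∑ q ∈ univ.filter (fun q : V × V => G.Adj q.1 q.2),
        (if (({a, b} : Finset V) ∩ {q.1, q.2}).Nonempty then
          (-1 : ℚ) ^ (dimS ({a, b} : Finset V) + dimS ({q.1, q.2} : Finset V)) else 0)
      = 2 * (G.degree a : ℚ) + 2 * (G.degree b : ℚ) - 2 := by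
  rw [sum_adjPairs]
  have hpt : ∀ c d : V, (if G.Adj c d then
      (if (({a, b} : Finset V) ∩ {c, d}).Nonempty then
        (-1 : ℚ) ^ (dimS ({a, b} : Finset V) + dimS ({c, d} : Finset V)) else 0) else 0)
      = (if G.Adj c d then (if a = c then (1 : ℚ) else 0) else 0)
        + (if G.Adj c d then (if a = d then (1 : ℚ) else 0) else 0)
        + (if G.Adj c d then (if b = c then (1 : ℚ) else 0) else 0)
        + (if G.Adj c d then (if b = d then (1 : ℚ) else 0) else 0)
        - (if G.Adj c d then (if a = c ∧ b = d then (1 : ℚ) else 0) else 0)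
        - (if G.Adj c d then (if a = d ∧ b = c then (1 : ℚ) else 0) else 0) := by
    intro c d
    by_cases h : G.Adj c d
    · simp only [if_pos h]
      rw [dim_pair hab.ne, dim_pair h.ne]
      norm_num
      exact ind_pair hab.ne h.ne
    · simp only [if_neg h]
      norm_num
  simp_rw [hpt, Finset.sum_sub_distrib, Finset.sum_add_distrib]
  rw [sum_adj_fst_eq G a, sum_adj_snd_eq G a, sum_adj_fst_eq G b, sum_adj_snd_eq G b,
    sum_adj_both G a b]
  have : ∑ c : V, ∑ d : V, (if G.Adj c d then (if a = d ∧ b = c then (1 : ℚ) else 0) else 0)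
      = if G.Adj b a then (1 : ℚ) else 0 := by
    rw [← sum_adj_both G b a]
    refine Finset.sum_congr rfl fun c _ => Finset.sum_congr rfl fun d _ => ?_
    by_cases h : G.Adj c d <;> simp [h, and_comm]
  rw [this, if_pos hab, if_pos hab.symm]
  ring

end aux6

section aux7
variable (G : SimpleGraph V) [DecidableRel G.Adj]

lemma piece4 :
    ∑ p ∈ univ.filter (fun p : V × V => G.Adj p.1 p.2),
      ∑ q ∈ univ.filter (fun q : V × V => G.Adj q.1 q.2),
        (if (({p.1, p.2} : Finset V) ∩ {q.1, q.2}).Nonempty then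
          (-1 : ℚ) ^ (dimS ({p.1, p.2} : Finset V) + dimS ({q.1, q.2} : Finset V)) else 0)
      = 4 * (∑ v : V, (G.degree v : ℚ) ^ 2) - 2 * ∑ v : V, (G.degree v : ℚ) := by
  rw [sum_adjPairs]
  have hpt : ∀ a b : V, (if G.Adj a b then
      (∑ q ∈ univ.filter (fun q : V × V => G.Adj q.1 q.2),
        (if (({a, b} : Finset V) ∩ {q.1, q.2}).Nonempty then
          (-1 : ℚ) ^ (dimS ({a, b} : Finset V) + dimS ({q.1, q.2} : Finset V)) else 0)) else 0)
      = (if G.Adj a b then (2 * (G.degree a : ℚ)) else 0)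
        + (if G.Adj a b then (2 * (G.degree b : ℚ)) else 0)
        + (if G.Adj a b then (-2 : ℚ) else 0) := by
    intro a b
    by_cases h : G.Adj a b
    · simp only [if_pos h, pair_pair_sum G h]
      ring
    · simp [h]
  simp_rw [hpt, Finset.sum_add_distrib]
  rw [sum_adj_left G (fun a => 2 * (G.degree a : ℚ)),
    sum_adj_right G (fun b => 2 * (G.degree b : ℚ)),
    sum_adj_left G (fun _ => (-2 : ℚ))]
  have e1 : 4 * (∑ v : V, (G.degree v : ℚ) ^ 2) - 2 * (∑ v : V, (G.degree v : ℚ))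
      = ∑ v : V, (4 * (G.degree v : ℚ) ^ 2 - 2 * (G.degree v : ℚ)) := by
    rw [Finset.mul_sum, Finset.mul_sum, ← Finset.sum_sub_distrib]
  rw [e1, ← Finset.sum_add_distrib, ← Finset.sum_add_distrib]
  exact Finset.sum_congr rfl fun a _ => by ring

lemma neighbor_deg_sum :
    ∑ v : V, ∑ w ∈ G.neighborFinset v, (G.degree w : ℚ)
      = ∑ v : V, (G.degree v : ℚ) ^ 2 := by
  have : ∀ v : V, ∑ w ∈ G.neighborFinset v, (G.degree w : ℚ)
      = ∑ w : V, (if G.Adj v w then (G.degree w : ℚ) else 0) := by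
    intro v
    rw [SimpleGraph.neighborFinset_eq_filter, Finset.sum_filter]
  simp_rw [this]
  rw [sum_adj_right G (fun w => (G.degree w : ℚ))]
  exact Finset.sum_congr rfl fun a _ => by ring

end aux7

theorem wu_curvature_triangle_free (G : SimpleGraph V) [DecidableRel G.Adj]
    (hfree : G.CliqueFree 3) :
    ∑ v : V, (1 - 5 * (G.degree v : ℚ) / 2 + (G.degree v : ℚ) ^ 2 / 2 +
        (∑ w ∈ G.neighborFinset v, (G.degree w : ℚ)) / 2) = (wu G : ℚ) := by
  have hwu : ((wu G : ℤ) : ℚ) = ∑ x ∈ simplices G, ∑ y ∈ simplices G,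
      (if (x ∩ y).Nonempty then (-1 : ℚ) ^ (dimS x + dimS y) else 0) := by
    rw [wu]
    push_cast [apply_ite (fun z : ℤ => (z : ℚ))]
    rfl
  rw [hwu]
  rw [sum_simplices_eq G hfree]
  have hin : ∀ x : Finset V, ∑ y ∈ simplices G,
      (if (x ∩ y).Nonempty then (-1 : ℚ) ^ (dimS x + dimS y) else 0)
      = (∑ w : V, (if (x ∩ {w}).Nonempty then (-1 : ℚ) ^ (dimS x + dimS {w}) else 0))
        + (1 / 2) * ∑ q ∈ univ.filter (fun q : V × V => G.Adj q.1 q.2),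
            (if (x ∩ {q.1, q.2}).Nonempty then (-1 : ℚ) ^ (dimS x + dimS {q.1, q.2}) else 0) := by
    intro x
    exact sum_simplices_eq G hfree _
  symm
  simp_rw [hin]
  rw [Finset.sum_add_distrib, ← Finset.mul_sum, piece1 (V := V), piece3 G,
    Finset.sum_add_distrib, ← Finset.mul_sum, piece2 G, piece4 G,
    Finset.sum_add_distrib, Finset.sum_add_distrib, Finset.sum_sub_distrib,
    ← Finset.sum_div, ← Finset.sum_div, ← Finset.sum_div, neighbor_deg_sum G, ← Finset.mul_sum,
    Finset.sum_const, card_univ, nsmul_eq_mul, mul_one]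
  ring
end

section
/- If G is a finite simple graph with clique number at most 3 (no K_4) and f-vector (v_0, v_1, v_2), then the f-vector of its Barycentric refinement G_1 is (v_0 + v_1 + v_2, 2·v_1 + 6·v_2, 6·v_2). -/
open Finset

variable {V : Type*} [Fintype V] [DecidableEq V]

/-- The Barycentric refinement of `G`: vertices are the simplices of `G`,
two joined when one is strictly contained in the other. -/
def barycentric (G : SimpleGraph V) [DecidableRel G.Adj] :
    SimpleGraph {s : Finset V // s ∈ simplices G} where
  Adj x y := x.val ⊂ y.val ∨ y.val ⊂ x.val
  symm := ⟨by intro x y h; exact h.symm⟩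
  loopless := ⟨by intro x h; cases h with
    | inl h => exact (ssubset_irrefl _ h)
    | inr h => exact (ssubset_irrefl _ h)⟩

instance (G : SimpleGraph V) [DecidableRel G.Adj] :
    DecidableRel (barycentric G).Adj :=
  fun x y => inferInstanceAs (Decidable (x.val ⊂ y.val ∨ y.val ⊂ x.val))


variable {G : SimpleGraph V} [DecidableRel G.Adj]

lemma mem_simplices' {s : Finset V} :
    s ∈ simplices G ↔ s.Nonempty ∧ ∀ a ∈ s, ∀ b ∈ s, a ≠ b → G.Adj a b := by
  simp [simplices]

lemma sub_mem_simplices {s t : Finset V} (hs : s ∈ simplices G) (hts : t ⊆ s)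
    (ht : t.Nonempty) : t ∈ simplices G := by
  rw [mem_simplices'] at hs ⊢
  exact ⟨ht, fun a ha b hb hab => hs.2 a (hts ha) b (hts hb) hab⟩

lemma one_le_card_of_mem {s : Finset V} (hs : s ∈ simplices G) : 1 ≤ s.card :=
  (mem_simplices'.1 hs).1.card_pos

lemma card_le_three (hfree : G.CliqueFree 4) {s : Finset V} (hs : s ∈ simplices G) :
    s.card ≤ 3 := by
  by_contra h
  obtain ⟨t, hts, ht⟩ := Finset.exists_subset_card_eq (by omega : 4 ≤ s.card)
  refine hfree t ⟨?_, ht⟩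
  intro a ha b hb hab
  exact (mem_simplices'.1 hs).2 a (hts ha) b (hts hb) hab

lemma filter_ssubset_eq {s : Finset V} (hs : s ∈ simplices G) :
    (simplices G).filter (fun x => x ⊂ s) = s.powerset \ {∅, s} := by
  ext x
  simp only [Finset.mem_filter, Finset.mem_sdiff, Finset.mem_powerset,
    Finset.mem_insert, Finset.mem_singleton]
  constructor
  · rintro ⟨hx, hxs⟩
    exact ⟨hxs.subset, by
      push_neg
      exact ⟨(mem_simplices'.1 hx).1, hxs.ne⟩⟩
  · rintro ⟨hsub, hne⟩
    push_neg at hne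
    exact ⟨sub_mem_simplices hs hsub hne.1,
      Finset.ssubset_iff_subset_ne.2 ⟨hsub, hne.2⟩⟩

lemma card_filter_ssubset {s : Finset V} (hs : s ∈ simplices G) :
    ((simplices G).filter (fun x => x ⊂ s)).card = 2 ^ s.card - 2 := by
  rw [filter_ssubset_eq hs, Finset.card_sdiff_of_subset, Finset.card_powerset]
  · congr 1
    rw [Finset.card_insert_of_notMem, Finset.card_singleton]
    simp only [Finset.mem_singleton]
    exact fun h => (mem_simplices'.1 hs).1.ne_empty h.symm
  · intro x hx
    simp only [Finset.mem_insert, Finset.mem_singleton] at hx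
    rcases hx with rfl | rfl
    · simp
    · simp

lemma pair_eq_of_chain {a b c d : Finset V} (hab : a ⊂ b) (hcd : c ⊂ d)
    (h : ({a, b} : Finset (Finset V)) = {c, d}) : a = c ∧ b = d := by
  have hc1 := Finset.card_lt_card hab
  have hc2 := Finset.card_lt_card hcd
  have ha : a = c ∨ a = d := by
    have : a ∈ ({c, d} : Finset (Finset V)) := h ▸ (by simp)
    simpa using this
  have hb : b = c ∨ b = d := by
    have : b ∈ ({c, d} : Finset (Finset V)) := h ▸ (by simp)
    simpa using this
  rcases ha with rfl | rfl <;> rcases hb with rfl | rfl <;>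
    first | exact ⟨rfl, rfl⟩ | omega

lemma triple_eq_of_chain {a b c a' b' c' : Finset V} (h1 : a ⊂ b) (h2 : b ⊂ c)
    (h1' : a' ⊂ b') (h2' : b' ⊂ c')
    (h : ({a, b, c} : Finset (Finset V)) = {a', b', c'}) :
    a = a' ∧ b = b' ∧ c = c' := by
  have hc1 := Finset.card_lt_card h1
  have hc2 := Finset.card_lt_card h2
  have hc1' := Finset.card_lt_card h1'
  have hc2' := Finset.card_lt_card h2'
  have ha : a = a' ∨ a = b' ∨ a = c' := by
    have : a ∈ ({a', b', c'} : Finset (Finset V)) := h ▸ (by simp)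
    simpa using this
  have hb : b = a' ∨ b = b' ∨ b = c' := by
    have : b ∈ ({a', b', c'} : Finset (Finset V)) := h ▸ (by simp)
    simpa using this
  have hc : c = a' ∨ c = b' ∨ c = c' := by
    have : c ∈ ({a', b', c'} : Finset (Finset V)) := h ▸ (by simp)
    simpa using this
  rcases ha with rfl | rfl | rfl <;> rcases hb with rfl | rfl | rfl <;>
    rcases hc with rfl | rfl | rfl <;>
    first | exact ⟨rfl, rfl, rfl⟩ | omega

lemma bary_adj {x y : {s : Finset V // s ∈ simplices G}} :
    (barycentric G).Adj x y ↔ x.val ⊂ y.val ∨ y.val ⊂ x.val := Iff.rfl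

def chains2 (G : SimpleGraph V) [DecidableRel G.Adj] : Finset (Finset V × Finset V) :=
  (simplices G ×ˢ simplices G).filter fun p => p.1 ⊂ p.2

def chains3 (G : SimpleGraph V) [DecidableRel G.Adj] :
    Finset ((Finset V × Finset V) × Finset V) :=
  ((simplices G ×ˢ simplices G) ×ˢ simplices G).filter fun p =>
    p.1.1 ⊂ p.1.2 ∧ p.1.2 ⊂ p.2

lemma mem_chains2 {p : Finset V × Finset V} :
    p ∈ chains2 G ↔ p.1 ∈ simplices G ∧ p.2 ∈ simplices G ∧ p.1 ⊂ p.2 := by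
  simp [chains2, Finset.mem_filter, Finset.mem_product, and_assoc]

lemma mem_chains3 {p : (Finset V × Finset V) × Finset V} :
    p ∈ chains3 G ↔ p.1.1 ∈ simplices G ∧ p.1.2 ∈ simplices G ∧ p.2 ∈ simplices G ∧
      p.1.1 ⊂ p.1.2 ∧ p.1.2 ⊂ p.2 := by
  simp [chains3, Finset.mem_filter, Finset.mem_product, and_assoc]

/-- vertices of the barycentric refinement -/
lemma nfB0 : nf (barycentric G) 0 = (simplices G).card := by
  have : ((simplices (barycentric G)).filter fun s => s.card = 1) =
      Finset.univ.image (fun x : {s : Finset V // s ∈ simplices G} => ({x} : Finset _)) := by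
    ext t
    simp only [Finset.mem_filter, Finset.mem_image, Finset.mem_univ, true_and]
    constructor
    · rintro ⟨ht, hc⟩
      obtain ⟨x, rfl⟩ := Finset.card_eq_one.1 hc
      exact ⟨x, rfl⟩
    · rintro ⟨x, rfl⟩
      refine ⟨mem_simplices'.2 ⟨Finset.singleton_nonempty x, ?_⟩, Finset.card_singleton x⟩
      intro a ha b hb hab
      simp only [Finset.mem_singleton] at ha hb
      subst ha; subst hb; exact absurd rfl hab
  rw [nf, show (0 : ℕ) + 1 = 1 from rfl, this,
    Finset.card_image_of_injective _ (fun x y h => Finset.singleton_injective h)]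
  simp [Fintype.card_coe]

lemma nfB1 : nf (barycentric G) 1 = (chains2 G).card := by
  rw [nf]
  symm
  refine Finset.card_bij
    (fun p hp => ({⟨p.1, (mem_chains2.1 hp).1⟩, ⟨p.2, (mem_chains2.1 hp).2.1⟩} :
      Finset {s : Finset V // s ∈ simplices G})) ?_ ?_ ?_
  · intro p hp
    obtain ⟨h1, h2, hss⟩ := mem_chains2.1 hp
    have hne : (⟨p.1, h1⟩ : {s : Finset V // s ∈ simplices G}) ≠ ⟨p.2, h2⟩ := by
      simp only [ne_eq, Subtype.mk.injEq]
      exact hss.ne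
    refine Finset.mem_filter.2 ⟨mem_simplices'.2 ⟨⟨_, Finset.mem_insert_self _ _⟩, ?_⟩, ?_⟩
    · intro a ha b hb hab
      simp only [Finset.mem_insert, Finset.mem_singleton] at ha hb
      rcases ha with rfl | rfl <;> rcases hb with rfl | rfl
      · exact absurd rfl hab
      · exact Or.inl hss
      · exact Or.inr hss
      · exact absurd rfl hab
    · rw [Finset.card_pair hne]
  · intro p hp q hq h
    obtain ⟨hp1, hp2, hpss⟩ := mem_chains2.1 hp
    obtain ⟨hq1, hq2, hqss⟩ := mem_chains2.1 hq
    have h' : ({p.1, p.2} : Finset (Finset V)) = {q.1, q.2} := by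
      have := congrArg (Finset.image Subtype.val) h
      simpa using this
    obtain ⟨e1, e2⟩ := pair_eq_of_chain hpss hqss h'
    exact Prod.ext e1 e2
  · intro t ht
    obtain ⟨hts, htc⟩ := Finset.mem_filter.1 ht
    obtain ⟨u, v, huv, rfl⟩ := Finset.card_eq_two.1 htc
    have hadj : (barycentric G).Adj u v := by
      refine (mem_simplices'.1 hts).2 u (by simp) v (by simp) huv
    rcases bary_adj.1 hadj with hss | hss
    · refine ⟨(u.val, v.val), mem_chains2.2 ⟨u.2, v.2, hss⟩, ?_⟩
      simp
    · refine ⟨(v.val, u.val), mem_chains2.2 ⟨v.2, u.2, hss⟩, ?_⟩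
      simp [Finset.pair_comm]

lemma sort3 {u v w : {s : Finset V // s ∈ simplices G}}
    (huv : (barycentric G).Adj u v) (huw : (barycentric G).Adj u w)
    (hvw : (barycentric G).Adj v w) :
    ∃ x y z : {s : Finset V // s ∈ simplices G}, x.val ⊂ y.val ∧ y.val ⊂ z.val ∧
      ({x, y, z} : Finset {s : Finset V // s ∈ simplices G}) = {u, v, w} := by
  rcases bary_adj.1 huv with h1 | h1 <;> rcases bary_adj.1 huw with h2 | h2 <;>
    rcases bary_adj.1 hvw with h3 | h3
  · exact ⟨u, v, w, h1, h3, rfl⟩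
  · exact ⟨u, w, v, h2, h3, by ext a; simp; tauto⟩
  · exact ⟨w, u, v, h2, h1, by ext a; simp; tauto⟩
  · -- u ⊂ v, w ⊂ u, w ⊂ v? h2 : w ⊂ u, h3 : w ⊂ v : w ⊂ u ⊂ v
    exact ⟨w, u, v, h2, h1, by ext a; simp; tauto⟩
  · -- v ⊂ u, u ⊂ w, v ⊂ w
    exact ⟨v, u, w, h1, h2, by ext a; simp; tauto⟩
  · -- v ⊂ u, u ⊂ w, w ⊂ v : cycle
    exact absurd (h2.trans (h3.trans h1)) (ssubset_irrefl _)
  · -- v ⊂ u, w ⊂ u, v ⊂ w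
    exact ⟨v, w, u, h3, h2, by ext a; simp; tauto⟩
  · exact ⟨w, v, u, h3, h1, by ext a; simp; tauto⟩

lemma nfB2 : nf (barycentric G) 2 = (chains3 G).card := by
  rw [nf]
  symm
  refine Finset.card_bij
    (fun p hp => ({⟨p.1.1, (mem_chains3.1 hp).1⟩, ⟨p.1.2, (mem_chains3.1 hp).2.1⟩,
      ⟨p.2, (mem_chains3.1 hp).2.2.1⟩} :
      Finset {s : Finset V // s ∈ simplices G})) ?_ ?_ ?_
  · intro p hp
    obtain ⟨h1, h2, h3, hss1, hss2⟩ := mem_chains3.1 hp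
    have hss3 : p.1.1 ⊂ p.2 := hss1.trans hss2
    have hne12 : (⟨p.1.1, h1⟩ : {s : Finset V // s ∈ simplices G}) ≠ ⟨p.1.2, h2⟩ := by
      simp only [ne_eq, Subtype.mk.injEq]; exact hss1.ne
    have hne13 : (⟨p.1.1, h1⟩ : {s : Finset V // s ∈ simplices G}) ≠ ⟨p.2, h3⟩ := by
      simp only [ne_eq, Subtype.mk.injEq]; exact hss3.ne
    have hne23 : (⟨p.1.2, h2⟩ : {s : Finset V // s ∈ simplices G}) ≠ ⟨p.2, h3⟩ := by
      simp only [ne_eq, Subtype.mk.injEq]; exact hss2.ne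
    refine Finset.mem_filter.2 ⟨mem_simplices'.2 ⟨⟨_, Finset.mem_insert_self _ _⟩, ?_⟩, ?_⟩
    · intro a ha b hb hab
      simp only [Finset.mem_insert, Finset.mem_singleton] at ha hb
      rcases ha with rfl | rfl | rfl <;> rcases hb with rfl | rfl | rfl <;>
        first
          | exact absurd rfl hab
          | exact Or.inl hss1
          | exact Or.inr hss1
          | exact Or.inl hss2
          | exact Or.inr hss2
          | exact Or.inl hss3
          | exact Or.inr hss3
    · rw [Finset.card_insert_of_notMem (by simp [hne12, hne13]),
        Finset.card_pair hne23]
  · intro p hp q hq h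
    obtain ⟨hp1, hp2, hp3, hpss1, hpss2⟩ := mem_chains3.1 hp
    obtain ⟨hq1, hq2, hq3, hqss1, hqss2⟩ := mem_chains3.1 hq
    have h' : ({p.1.1, p.1.2, p.2} : Finset (Finset V)) = {q.1.1, q.1.2, q.2} := by
      have := congrArg (Finset.image Subtype.val) h
      simpa using this
    obtain ⟨e1, e2, e3⟩ := triple_eq_of_chain hpss1 hpss2 hqss1 hqss2 h'
    exact Prod.ext (Prod.ext e1 e2) e3
  · intro t ht
    obtain ⟨hts, htc⟩ := Finset.mem_filter.1 ht
    obtain ⟨u, v, w, huv, huw, hvw, rfl⟩ := Finset.card_eq_three.1 htc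
    have hadjuv : (barycentric G).Adj u v :=
      (mem_simplices'.1 hts).2 u (by simp) v (by simp) huv
    have hadjuw : (barycentric G).Adj u w :=
      (mem_simplices'.1 hts).2 u (by simp) w (by simp) huw
    have hadjvw : (barycentric G).Adj v w :=
      (mem_simplices'.1 hts).2 v (by simp) w (by simp) hvw
    obtain ⟨x, y, z, hxy, hyz, hset⟩ := sort3 hadjuv hadjuw hadjvw
    refine ⟨((x.val, y.val), z.val),
      mem_chains3.2 ⟨x.2, y.2, z.2, hxy, hyz⟩, ?_⟩
    simpa using hset

lemma card_chains2_sum : (chains2 G).card = ∑ y ∈ simplices G, (2 ^ y.card - 2) := by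
  rw [Finset.card_eq_sum_card_fiberwise
    (f := Prod.snd) (t := simplices G) (fun p hp => (mem_chains2.1 hp).2.1)]
  refine Finset.sum_congr rfl fun y hy => ?_
  rw [← card_filter_ssubset hy]
  have : (chains2 G).filter (fun p => p.2 = y) =
      ((simplices G).filter (fun x => x ⊂ y)).image (fun x => (x, y)) := by
    ext p
    simp only [Finset.mem_filter, Finset.mem_image, mem_chains2]
    constructor
    · rintro ⟨⟨h1, h2, hss⟩, rfl⟩
      exact ⟨p.1, ⟨h1, hss⟩, rfl⟩
    · rintro ⟨x, ⟨hx, hss⟩, rfl⟩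
      exact ⟨⟨hx, hy, hss⟩, rfl⟩
  rw [this, Finset.card_image_of_injective _ (fun a b h => (Prod.mk.injEq _ _ _ _ ▸ h).1)]

lemma card_chains3_sum :
    (chains3 G).card = ∑ z ∈ simplices G, ∑ y ∈ (simplices G).filter (fun x => x ⊂ z),
      (2 ^ y.card - 2) := by
  rw [Finset.card_eq_sum_card_fiberwise
    (f := Prod.snd) (t := simplices G) (fun p hp => (mem_chains3.1 hp).2.2.1)]
  refine Finset.sum_congr rfl fun z hz => ?_
  rw [Finset.card_eq_sum_card_fiberwise
    (f := fun p => p.1.2) (t := (simplices G).filter (fun x => x ⊂ z))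
    (fun p hp => by
      obtain ⟨hpc, he⟩ := Finset.mem_filter.1 hp
      obtain ⟨h1, h2, h3, hss1, hss2⟩ := mem_chains3.1 hpc
      exact Finset.mem_filter.2 ⟨h2, he ▸ hss2⟩)]
  refine Finset.sum_congr rfl fun y hy => ?_
  obtain ⟨hyS, hyz⟩ := Finset.mem_filter.1 hy
  rw [← card_filter_ssubset hyS]
  have : ((chains3 G).filter (fun p => p.2 = z)).filter (fun p => p.1.2 = y) =
      ((simplices G).filter (fun x => x ⊂ y)).image (fun x => ((x, y), z)) := by
    ext p
    constructor
    · intro hp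
      obtain ⟨hp', he1⟩ := Finset.mem_filter.1 hp
      obtain ⟨hp'', he2⟩ := Finset.mem_filter.1 hp'
      obtain ⟨h1, h2, h3, hss1, hss2⟩ := mem_chains3.1 hp''
      refine Finset.mem_image.2 ⟨p.1.1, Finset.mem_filter.2 ⟨h1, he1 ▸ hss1⟩, ?_⟩
      exact Prod.ext (Prod.ext rfl he1.symm) he2.symm
    · intro hp
      obtain ⟨x, hx', rfl⟩ := Finset.mem_image.1 hp
      obtain ⟨hx, hss⟩ := Finset.mem_filter.1 hx'
      exact Finset.mem_filter.2 ⟨Finset.mem_filter.2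
        ⟨mem_chains3.2 ⟨hx, hyS, hz, hss, hyz⟩, rfl⟩, rfl⟩
  rw [this, Finset.card_image_of_injective _ ?_]
  intro a b h
  simpa using h

lemma sum_eval (hfree : G.CliqueFree 4) :
    ∑ y ∈ simplices G, (2 ^ y.card - 2) = 2 * nf G 1 + 6 * nf G 2 := by
  have hpt : ∀ y ∈ simplices G, 2 ^ y.card - 2 =
      (if y.card = 2 then 2 else 0) + (if y.card = 3 then 6 else 0) := by
    intro y hy
    have h1 := one_le_card_of_mem hy
    have h3 := card_le_three hfree hy
    rcases (by omega : y.card = 1 ∨ y.card = 2 ∨ y.card = 3) with h | h | h <;> simp [h]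
  rw [Finset.sum_congr rfl hpt, Finset.sum_add_distrib, ← Finset.sum_filter,
    ← Finset.sum_filter, Finset.sum_const, Finset.sum_const, smul_eq_mul, smul_eq_mul]
  have e1 : nf G 1 = ((simplices G).filter fun s => s.card = 2).card := rfl
  have e2 : nf G 2 = ((simplices G).filter fun s => s.card = 3).card := rfl
  rw [e1, e2]; ring

lemma card_simplices_eval (hfree : G.CliqueFree 4) :
    (simplices G).card = nf G 0 + nf G 1 + nf G 2 := by
  have hpt : ∀ y ∈ simplices G, (1 : ℕ) =
      (if y.card = 1 then 1 else 0) + ((if y.card = 2 then 1 else 0) +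
        (if y.card = 3 then 1 else 0)) := by
    intro y hy
    have h1 := one_le_card_of_mem hy
    have h3 := card_le_three hfree hy
    rcases (by omega : y.card = 1 ∨ y.card = 2 ∨ y.card = 3) with h | h | h <;> simp [h]
  rw [Finset.card_eq_sum_ones, Finset.sum_congr rfl hpt, Finset.sum_add_distrib,
    Finset.sum_add_distrib, ← Finset.sum_filter, ← Finset.sum_filter, ← Finset.sum_filter,
    Finset.sum_const, Finset.sum_const, Finset.sum_const]
  have e0 : nf G 0 = ((simplices G).filter fun s => s.card = 1).card := rfl
  have e1 : nf G 1 = ((simplices G).filter fun s => s.card = 2).card := rfl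
  have e2 : nf G 2 = ((simplices G).filter fun s => s.card = 3).card := rfl
  rw [e0, e1, e2]; simp; ring

lemma inner_eval (hfree : G.CliqueFree 4) {z : Finset V} (hz : z ∈ simplices G) :
    ∑ y ∈ (simplices G).filter (fun x => x ⊂ z), (2 ^ y.card - 2) =
      if z.card = 3 then 6 else 0 := by
  rw [filter_ssubset_eq hz]
  have h1 := one_le_card_of_mem hz
  have h3 := card_le_three hfree hz
  have hzne := (mem_simplices'.1 hz).1.ne_empty
  by_cases hc : z.card = 3
  · rw [if_pos hc, ← Finset.sum_filter_add_sum_filter_not _ (fun y => y.card = 2)]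
    have e1 : (z.powerset \ {∅, z}).filter (fun y => y.card = 2) =
        Finset.powersetCard 2 z := by
      ext y
      simp only [Finset.mem_filter, Finset.mem_sdiff, Finset.mem_powerset,
        Finset.mem_insert, Finset.mem_singleton, Finset.mem_powersetCard]
      constructor
      · rintro ⟨⟨hsub, _⟩, hcard⟩; exact ⟨hsub, hcard⟩
      · rintro ⟨hsub, hcard⟩
        refine ⟨⟨hsub, ?_⟩, hcard⟩
        push_neg
        refine ⟨?_, ?_⟩
        · rw [← Finset.card_pos]; omega
        · rintro rfl; omega
    have hs1 : ∑ y ∈ (z.powerset \ {∅, z}).filter (fun y => y.card = 2),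
        (2 ^ y.card - 2) = 6 := by
      rw [e1]
      have hpt : ∀ y ∈ Finset.powersetCard 2 z, 2 ^ y.card - 2 = 2 := by
        intro y hy
        rw [(Finset.mem_powersetCard.1 hy).2]
        decide
      rw [Finset.sum_congr rfl hpt, Finset.sum_const, Finset.card_powersetCard, hc,
        smul_eq_mul]
      decide
    have hs2 : ∑ y ∈ (z.powerset \ {∅, z}).filter (fun y => ¬y.card = 2),
        (2 ^ y.card - 2) = 0 := by
      refine Finset.sum_eq_zero fun y hy => ?_
      simp only [Finset.mem_filter, Finset.mem_sdiff, Finset.mem_powerset,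
        Finset.mem_insert, Finset.mem_singleton] at hy
      obtain ⟨⟨hsub, hne⟩, hnc⟩ := hy
      push_neg at hne
      have hlt : y.card < z.card := Finset.card_lt_card ⟨hsub, fun h =>
        hne.2 (Finset.Subset.antisymm hsub h)⟩
      have hge : 1 ≤ y.card := Finset.card_pos.2 hne.1
      have : y.card = 1 := by omega
      simp [this]
    rw [hs1, hs2]
    
  · rw [if_neg hc]
    refine Finset.sum_eq_zero fun y hy => ?_
    simp only [Finset.mem_sdiff, Finset.mem_powerset, Finset.mem_insert,
      Finset.mem_singleton] at hy
    obtain ⟨hsub, hne⟩ := hy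
    push_neg at hne
    have hlt : y.card < z.card := Finset.card_lt_card ⟨hsub, fun h =>
      hne.2 (Finset.Subset.antisymm hsub h)⟩
    have hge : 1 ≤ y.card := Finset.card_pos.2 hne.1
    have : y.card = 1 := by omega
    simp [this]

lemma chains3_eval (hfree : G.CliqueFree 4) : (chains3 G).card = 6 * nf G 2 := by
  rw [card_chains3_sum, Finset.sum_congr rfl (fun z hz => inner_eval hfree hz),
    ← Finset.sum_filter, Finset.sum_const, smul_eq_mul]
  have e2 : nf G 2 = ((simplices G).filter fun s => s.card = 3).card := rfl
  rw [e2, Nat.mul_comm]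


theorem fvector_barycentric_cliquefree_four (G : SimpleGraph V) [DecidableRel G.Adj]
    (hfree : G.CliqueFree 4) :
    nf (barycentric G) 0 = nf G 0 + nf G 1 + nf G 2 ∧
    nf (barycentric G) 1 = 2 * nf G 1 + 6 * nf G 2 ∧
    nf (barycentric G) 2 = 6 * nf G 2 := by
  refine ⟨?_, ?_, ?_⟩
  · rw [nfB0, card_simplices_eval hfree]
  · rw [nfB1, card_chains2_sum, sum_eval hfree]
  · rw [nfB2, chains3_eval hfree]
end
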